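/- For any two filters F′ and F″ on a finite poset X there exist a unique k ≥ 1 and a unique filter F : X → {1,…,k} of rank k such that: (i) whenever F″(u) < F″(v) one has F(u) < F(v), and (ii) whenever F″(u) = F″(v) one has F(u) < F(v) if and only if F′(u) < F′(v). -/

import Mathlib

/-- A filter on a poset `X`: a surjective order-preserving map `F : X → {1,…,rank}`
(we use `Fin rank` for `{1,…,rank}`). -/
structure PFilter (X : Type*) [PartialOrder X] where
  rank : ℕ
  toFun : X → Fin rank
  surjective : Function.Surjective toFun
  mono : ∀ a b : X, a ≤ b → toFun a ≤ toFun b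

/-- `F` is the filter product `F″·F′`: (i) `F″(u) < F″(v)` implies `F(u) < F(v)`, and
(ii) if `F″(u) = F″(v)` then `F(u) < F(v)` iff `F′(u) < F′(v)`. -/
def IsFilterProd {X : Type*} [PartialOrder X] (F'' F' F : PFilter X) : Prop :=
  (∀ u v : X, F''.toFun u < F''.toFun v → F.toFun u < F.toFun v) ∧
  (∀ u v : X, F''.toFun u = F''.toFun v → (F.toFun u < F.toFun v ↔ F'.toFun u < F'.toFun v))

/-- Two filters with the same strict comparisons are equal. -/
lemma PFilter.ext_of_lt_iff {X : Type*} [PartialOrder X] (F G : PFilter X)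
    (h : ∀ u v : X, F.toFun u < F.toFun v ↔ G.toFun u < G.toFun v) : F = G := by
  have heq : ∀ u v : X, F.toFun u = F.toFun v → G.toFun u = G.toFun v := by
    intro u v huv
    by_contra hne
    rcases lt_or_gt_of_ne hne with h1 | h1
    · exact absurd huv (ne_of_lt ((h u v).2 h1))
    · exact absurd huv.symm (ne_of_lt ((h v u).2 h1))
  set s := Function.surjInv F.surjective with hs
  have hFs : ∀ i, F.toFun (s i) = i := Function.surjInv_eq F.surjective
  set f : Fin F.rank → Fin G.rank := fun i => G.toFun (s i) with hf
  have hmono : StrictMono f := by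
    intro i j hij
    exact (h (s i) (s j)).1 (by rw [hFs, hFs]; exact hij)
  have hsurj : Function.Surjective f := by
    intro j
    obtain ⟨x, hx⟩ := G.surjective j
    refine ⟨F.toFun x, ?_⟩
    rw [hf]
    rw [← hx]
    exact heq _ _ (hFs _)
  have hrank : F.rank = G.rank := by
    have h1 : F.rank ≤ G.rank := by
      simpa using Fintype.card_le_of_injective f hmono.injective
    have h2 : G.rank ≤ F.rank := by
      simpa using Fintype.card_le_of_surjective f hsurj
    omega
  obtain ⟨n, Ff, Fs, Fm⟩ := F
  obtain ⟨m, Gf, Gs, Gm⟩ := G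
  dsimp at *
  subst hrank
  haveI : WellFoundedLT (Fin n) := inferInstance
  have hid : f = id := by
    refine (StrictMono.range_inj (β := Fin n) (γ := Fin n) hmono strictMono_id).1 ?_
    rw [Set.range_id, Set.range_eq_univ.2 hsurj]
  have : ∀ x, Gf x = Ff x := by
    intro x
    have := heq (s (Ff x)) x (hFs _)
    rw [← this]
    have := congrFun hid (Ff x)
    exact this
  congr 1
  ext x
  exact congrArg Fin.val (this x).symm

/-- The lexicographic product filter. -/
noncomputable def prodFilter {X : Type*} [PartialOrder X] [Finite X]
    (F' F'' : PFilter X) : PFilter X := by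
  haveI : Fintype X := Fintype.ofFinite X
  classical
  let g : X → Fin F''.rank ×ₗ Fin F'.rank := fun x => toLex (F''.toFun x, F'.toFun x)
  let S : Finset (Fin F''.rank ×ₗ Fin F'.rank) := Finset.image g Finset.univ
  let e := S.orderIsoOfFin rfl
  refine ⟨S.card, fun x => e.symm ⟨g x, Finset.mem_image_of_mem g (Finset.mem_univ x)⟩, ?_, ?_⟩
  · intro i
    have hmem : (e i : Fin F''.rank ×ₗ Fin F'.rank) ∈ S := (e i).2
    obtain ⟨x, _, hx⟩ := Finset.mem_image.1 hmem
    refine ⟨x, ?_⟩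
    have : (⟨g x, Finset.mem_image_of_mem g (Finset.mem_univ x)⟩ : {y // y ∈ S}) = e i :=
      Subtype.ext hx
    show e.symm _ = i
    rw [this, e.symm_apply_apply]
  · intro a b hab
    apply e.symm.monotone
    show g a ≤ g b
    rcases lt_or_eq_of_le (F''.mono a b hab) with h1 | h1
    · exact le_of_lt (Prod.Lex.lt_iff.2 (Or.inl h1))
    · exact Prod.Lex.le_iff.2 (Or.inr ⟨h1, F'.mono a b hab⟩)

lemma prodFilter_lt_iff {X : Type*} [PartialOrder X] [Finite X]
    (F' F'' : PFilter X) (u v : X) :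
    (prodFilter F' F'').toFun u < (prodFilter F' F'').toFun v ↔
      (F''.toFun u < F''.toFun v ∨ (F''.toFun u = F''.toFun v ∧ F'.toFun u < F'.toFun v)) := by
  haveI : Fintype X := Fintype.ofFinite X
  classical
  show (Finset.orderIsoOfFin _ rfl).symm
      (⟨toLex (F''.toFun u, F'.toFun u), _⟩ : {y // y ∈ _}) <
    (Finset.orderIsoOfFin _ rfl).symm ⟨toLex (F''.toFun v, F'.toFun v), _⟩ ↔ _
  rw [OrderIso.lt_iff_lt, Subtype.mk_lt_mk]
  exact Prod.Lex.lt_iff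

/-- Any filter-product has the canonical strict comparisons. -/
lemma isFilterProd_lt_iff {X : Type*} [PartialOrder X] {F'' F' F : PFilter X}
    (hF : IsFilterProd F'' F' F) (u v : X) :
    F.toFun u < F.toFun v ↔
      (F''.toFun u < F''.toFun v ∨ (F''.toFun u = F''.toFun v ∧ F'.toFun u < F'.toFun v)) := by
  obtain ⟨h1, h2⟩ := hF
  constructor
  · intro h
    rcases lt_trichotomy (F''.toFun u) (F''.toFun v) with ht | ht | ht
    · exact Or.inl ht
    · exact Or.inr ⟨ht, (h2 u v ht).1 h⟩
    · exact absurd (h1 v u ht) (not_lt_of_gt h)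
  · rintro (ht | ⟨ht, ht'⟩)
    · exact h1 u v ht
    · exact (h2 u v ht).2 ht'

/-- For any two filters `F′`, `F″` on a finite poset `X` there is a unique `k ≥ 1` and a
unique filter `F : X → {1,…,k}` satisfying the two filter-product conditions. -/
theorem filterProd_existsUnique {X : Type*} [PartialOrder X] [Finite X] [Nonempty X]
    (F' F'' : PFilter X) :
    ∃! F : PFilter X, 1 ≤ F.rank ∧ IsFilterProd F'' F' F := by
  refine ⟨prodFilter F' F'', ⟨?_, ?_, ?_⟩, ?_⟩
  · -- rank ≥ 1
    obtain ⟨x⟩ := ‹Nonempty X›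
    have := ((prodFilter F' F'').toFun x).pos
    omega
  · intro u v h
    exact (prodFilter_lt_iff F' F'' u v).2 (Or.inl h)
  · intro u v h
    constructor
    · intro hlt
      rcases (prodFilter_lt_iff F' F'' u v).1 hlt with h1 | h1
      · exact absurd h (ne_of_lt h1)
      · exact h1.2
    · intro hlt
      exact (prodFilter_lt_iff F' F'' u v).2 (Or.inr ⟨h, hlt⟩)
  · rintro G ⟨-, hG⟩
    refine PFilter.ext_of_lt_iff G (prodFilter F' F'') fun u v => ?_
    rw [isFilterProd_lt_iff hG, prodFilter_lt_iff]
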